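/- Let m ≥ C where C = 2^{D^8} and D = 2^{2048}, and let f : (0, m] → ℝ be defined piecewise (with c = D^{-16}/4) by f(n) = c·log²(Cn) for 0 < n ≤ m^{4/9}, f(n) = c²·log²(m^{4/9})·log²(C·n·m^{-4/9}) for m^{4/9} < n ≤ m^{8/9}, and f(n) = c³·log⁴(m^{4/9})·log²(C·n·m^{-8/9}) for m^{8/9} < n ≤ m. Then for any integer n with 1 < n ≤ m and any α ∈ [1/n, 1], f(α·n) ≥ α·f(n). -/

import Mathlib

lemma expA' (v u z : ℝ) (hv : 3 ≤ v) (hu : 0 ≤ u) (hz : z = v + u) :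
    z ^ 2 ≤ (2:ℝ) ^ u * v ^ 2 := by
  have hhalf : 1 + u / 3 ≤ (2:ℝ) ^ (u / 2) := by
    have h1 : 1 + u / 2 * Real.log 2 ≤ Real.exp (u / 2 * Real.log 2) := by
      linarith [Real.add_one_le_exp (u / 2 * Real.log 2)]
    have h2 : (2:ℝ) ^ (u / 2) = Real.exp (u / 2 * Real.log 2) := by
      rw [Real.rpow_def_of_pos two_pos]; ring_nf
    rw [h2]
    nlinarith [Real.log_two_gt_d9]
  have h1 : v + u ≤ (2:ℝ) ^ (u / 2) * v := by nlinarith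
  have h2 : (2:ℝ) ^ (u / 2) * (2:ℝ) ^ (u / 2) = (2:ℝ) ^ u := by
    rw [← Real.rpow_add two_pos]; ring_nf
  nlinarith [Real.rpow_pos_of_pos two_pos (u / 2)]

lemma caseB (K a r w u : ℝ) (hK : 3 ≤ K) (hr : 0 ≤ r) (hw : 0 ≤ w) (hwa : w ≤ a)
    (hu : u = r + (a - w)) :
    a ^ 2 * (K + r) ^ 2 ≤ 4 * K ^ 2 * (2:ℝ) ^ u * (K + w) ^ 2 := by
  have ha : 0 ≤ a := hw.trans hwa
  have h1 : (K + r) ^ 2 ≤ (2:ℝ) ^ r * K ^ 2 := expA' K r _ hK hr rfl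
  have h2 : (K + a) ^ 2 ≤ (2:ℝ) ^ (a - w) * (K + w) ^ 2 :=
    expA' (K + w) (a - w) _ (by linarith) (by linarith) (by ring)
  have h3 : a ^ 2 ≤ (K + a) ^ 2 := by nlinarith
  have hrp : (0:ℝ) < 2 ^ r := Real.rpow_pos_of_pos two_pos r
  have hap : (0:ℝ) < 2 ^ (a - w) := Real.rpow_pos_of_pos two_pos (a - w)
  have hmul : (2:ℝ) ^ (a - w) * (2:ℝ) ^ r = (2:ℝ) ^ u := by
    rw [← Real.rpow_add two_pos, hu]; ring_nf
  calc a ^ 2 * (K + r) ^ 2 ≤ (K + a) ^ 2 * ((2:ℝ) ^ r * K ^ 2) := by nlinarith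
    _ ≤ ((2:ℝ) ^ (a - w) * (K + w) ^ 2) * ((2:ℝ) ^ r * K ^ 2) := by nlinarith
    _ = ((2:ℝ) ^ (a - w) * (2:ℝ) ^ r) * (K ^ 2 * (K + w) ^ 2) := by ring
    _ = (2:ℝ) ^ u * (K ^ 2 * (K + w) ^ 2) := by rw [hmul]
    _ ≤ 4 * K ^ 2 * (2:ℝ) ^ u * (K + w) ^ 2 := by
        nlinarith [Real.rpow_pos_of_pos two_pos u, sq_nonneg K, sq_nonneg (K + w),
          mul_nonneg (sq_nonneg K) (sq_nonneg (K + w))]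

lemma caseC (K a r w u : ℝ) (hK : 3 ≤ K) (hr : 0 ≤ r) (hw : 0 ≤ w) (hwa : w ≤ a)
    (hu : u = r + a + (a - w)) :
    a ^ 4 * (K + r) ^ 2 ≤ 16 * K ^ 4 * (2:ℝ) ^ u * (K + w) ^ 2 := by
  have ha : 0 ≤ a := hw.trans hwa
  have h1 : a ^ 2 * (K + r) ^ 2 ≤ 4 * K ^ 2 * (2:ℝ) ^ (r + (a - w)) * (K + w) ^ 2 :=
    caseB K a r w _ hK hr hw hwa rfl
  have h2 : (K + a) ^ 2 ≤ (2:ℝ) ^ a * K ^ 2 := expA' K a _ hK ha rfl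
  have h3 : a ^ 2 ≤ (2:ℝ) ^ a * K ^ 2 := by nlinarith
  have hmul : (2:ℝ) ^ a * (2:ℝ) ^ (r + (a - w)) = (2:ℝ) ^ u := by
    rw [← Real.rpow_add two_pos, hu]; ring_nf
  have hap : (0:ℝ) < 2 ^ a := Real.rpow_pos_of_pos two_pos a
  have hup : (0:ℝ) < 2 ^ (r + (a - w)) := Real.rpow_pos_of_pos two_pos (r + (a - w))
  calc a ^ 4 * (K + r) ^ 2 = a ^ 2 * (a ^ 2 * (K + r) ^ 2) := by ring
    _ ≤ ((2:ℝ) ^ a * K ^ 2) * (4 * K ^ 2 * (2:ℝ) ^ (r + (a - w)) * (K + w) ^ 2) := by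
        apply mul_le_mul h3 h1 (by positivity) (by positivity)
    _ = 4 * (K ^ 4) * ((2:ℝ) ^ a * (2:ℝ) ^ (r + (a - w))) * (K + w) ^ 2 := by ring
    _ = 4 * K ^ 4 * (2:ℝ) ^ u * (K + w) ^ 2 := by rw [hmul]
    _ ≤ 16 * K ^ 4 * (2:ℝ) ^ u * (K + w) ^ 2 := by
        nlinarith [Real.rpow_pos_of_pos two_pos u, sq_nonneg (K + w),
          pow_pos (lt_of_lt_of_le (by norm_num) hK) 4,
          mul_nonneg (pow_nonneg (by linarith : (0:ℝ) ≤ K) 4) (sq_nonneg (K + w))]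

/-- For `m ≥ C` with `D = 2^2048`, `C = 2^(D^8)`, `c = D^{-16}/4`, and `f` the
piecewise function of the paper, for any integer `1 < n ≤ m` and any
`α ∈ [1/n, 1]`, `f(α·n) ≥ α·f(n)`. -/
theorem f_superlinear (D C c m : ℝ)
    (hD : D = 2 ^ (2048 : ℕ))
    (hC : C = (2 : ℝ) ^ (D ^ 8))
    (hc : c = D ^ (-(16 : ℝ)) / 4)
    (hm : C ≤ m)
    (f : ℝ → ℝ)
    (hf₁ : ∀ x : ℝ, 0 < x → x ≤ m ^ ((4 : ℝ) / 9) →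
      f x = c * (Real.logb 2 (C * x)) ^ 2)
    (hf₂ : ∀ x : ℝ, m ^ ((4 : ℝ) / 9) < x → x ≤ m ^ ((8 : ℝ) / 9) →
      f x = c ^ 2 * (Real.logb 2 (m ^ ((4 : ℝ) / 9))) ^ 2 *
        (Real.logb 2 (C * x * m ^ (-(4 : ℝ) / 9))) ^ 2)
    (hf₃ : ∀ x : ℝ, m ^ ((8 : ℝ) / 9) < x → x ≤ m →
      f x = c ^ 3 * (Real.logb 2 (m ^ ((4 : ℝ) / 9))) ^ 4 *
        (Real.logb 2 (C * x * m ^ (-(8 : ℝ) / 9))) ^ 2) :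
    ∀ n : ℕ, 1 < n → (n : ℝ) ≤ m → ∀ α : ℝ, 1 / (n : ℝ) ≤ α → α ≤ 1 →
      α * f n ≤ f (α * n) := by
  intro n hn hnm α hα1 hα2
  have hn0 : (0:ℝ) < n := Nat.cast_pos.mpr (by omega)
  have hα0 : 0 < α := lt_of_lt_of_le (by positivity) hα1
  have hαn0 : 0 < α * n := mul_pos hα0 hn0
  have hαnn : α * n ≤ n := by nlinarith
  have hD2 : (2:ℝ) ≤ D := by
    rw [hD]; exact le_self_pow₀ (by norm_num) (by norm_num)
  have hD0 : (0:ℝ) < D := lt_of_lt_of_le two_pos hD2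
  have hK3 : (3:ℝ) ≤ D ^ 8 := by
    have := pow_le_pow_left₀ (by norm_num : (0:ℝ) ≤ 2) hD2 8
    norm_num at this; linarith
  set K := D ^ 8 with hKdef
  have hK0 : (0:ℝ) < K := by linarith
  have hC1 : (1:ℝ) < C := by
    rw [hC]
    calc (1:ℝ) = (2:ℝ) ^ (0:ℝ) := by rw [Real.rpow_zero]
      _ < (2:ℝ) ^ K := by
          rw [Real.rpow_lt_rpow_left_iff one_lt_two]; linarith
  have hC0 : (0:ℝ) < C := by linarith
  have hCne : C ≠ 0 := ne_of_gt hC0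
  have hm1 : (1:ℝ) < m := lt_of_lt_of_le hC1 hm
  have hm0 : (0:ℝ) < m := by linarith
  have hlogC : Real.logb 2 C = K := by
    rw [hC]; exact Real.logb_rpow (by norm_num) (by norm_num)
  have hKL : K ≤ Real.logb 2 m := by
    rw [← hlogC]
    exact Real.logb_le_logb_of_le one_lt_two hC0 hm
  set a := (4:ℝ) / 9 * Real.logb 2 m with hadef
  have ha0 : 0 ≤ a := by rw [hadef]; nlinarith
  have haa : Real.logb 2 (m ^ ((4:ℝ) / 9)) = a := by
    rw [Real.logb_rpow_eq_mul_logb_of_pos hm0, hadef]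
  have hm89 : Real.logb 2 (m ^ ((8:ℝ) / 9)) = 2 * a := by
    rw [Real.logb_rpow_eq_mul_logb_of_pos hm0, hadef]; ring
  have hm49p : (0:ℝ) < m ^ ((4:ℝ) / 9) := Real.rpow_pos_of_pos hm0 _
  have hm89p : (0:ℝ) < m ^ ((8:ℝ) / 9) := Real.rpow_pos_of_pos hm0 _
  -- log expansion helpers
  have hlog1 : ∀ x : ℝ, 0 < x → Real.logb 2 (C * x) = K + Real.logb 2 x := by
    intro x hx
    rw [Real.logb_mul hCne (ne_of_gt hx), hlogC]
  have hlog2 : ∀ x : ℝ, 0 < x →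
      Real.logb 2 (C * x * m ^ (-(4:ℝ) / 9)) = K + Real.logb 2 x - a := by
    intro x hx
    rw [Real.logb_mul (mul_ne_zero hCne (ne_of_gt hx))
        (ne_of_gt (Real.rpow_pos_of_pos hm0 _)),
      Real.logb_mul hCne (ne_of_gt hx), hlogC,
      Real.logb_rpow_eq_mul_logb_of_pos hm0, hadef]
    ring
  have hlog3 : ∀ x : ℝ, 0 < x →
      Real.logb 2 (C * x * m ^ (-(8:ℝ) / 9)) = K + Real.logb 2 x - 2 * a := by
    intro x hx
    rw [Real.logb_mul (mul_ne_zero hCne (ne_of_gt hx))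
        (ne_of_gt (Real.rpow_pos_of_pos hm0 _)),
      Real.logb_mul hCne (ne_of_gt hx), hlogC,
      Real.logb_rpow_eq_mul_logb_of_pos hm0, hadef]
    ring
  obtain ⟨s, hsdef⟩ : ∃ s, Real.logb 2 (n:ℝ) = s := ⟨_, rfl⟩
  obtain ⟨t, htdef⟩ : ∃ t, Real.logb 2 α = t := ⟨_, rfl⟩
  have hts : Real.logb 2 (α * n) = t + s := by
    rw [Real.logb_mul (ne_of_gt hα0) (ne_of_gt hn0), hsdef, htdef]
  have ht0 : t ≤ 0 := by
    rw [← htdef]; exact Real.logb_nonpos one_lt_two hα0.le hα2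
  have h1αn : (1:ℝ) ≤ α * n := (div_le_iff₀ hn0).mp hα1
  have hw0 : 0 ≤ t + s := by
    rw [← hts]; exact Real.logb_nonneg one_lt_two h1αn
  have hαeq : α = (2:ℝ) ^ t := by
    rw [← htdef]; exact (Real.rpow_logb two_pos (by norm_num) hα0).symm
  have hDn : D ^ (-(16:ℝ)) = (D ^ (16:ℕ))⁻¹ := by
    rw [← Real.rpow_natCast D 16, ← Real.rpow_neg hD0.le]; norm_num
  have hc4 : c * (4 * K ^ 2) = 1 := by
    rw [hc, hDn, hKdef]
    have hDne : D ≠ 0 := ne_of_gt hD0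
    field_simp
  have hcpos : 0 < c := by
    rw [hc, hDn]; positivity
  have h2t : (2:ℝ) ^ t * (2:ℝ) ^ (-t) = 1 := by
    rw [← Real.rpow_add two_pos]; simp
  have h2tp : (0:ℝ) < (2:ℝ) ^ t := Real.rpow_pos_of_pos two_pos t
  rcases le_or_gt (n:ℝ) (m ^ ((4:ℝ) / 9)) with hn1 | hn1
  · -- case A: both in piece 1
    have hαn1 : α * n ≤ m ^ ((4:ℝ) / 9) := le_trans hαnn hn1
    rw [hf₁ n hn0 hn1, hf₁ (α * n) hαn0 hαn1, hlog1 n hn0, hlog1 _ hαn0, hts, hsdef]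
    have key : (K + s) ^ 2 ≤ (2:ℝ) ^ (-t) * (K + (t + s)) ^ 2 :=
      expA' (K + (t + s)) (-t) _ (by linarith) (by linarith) (by ring)
    calc α * (c * (K + s) ^ 2) = c * (2:ℝ) ^ t * (K + s) ^ 2 := by rw [hαeq]; ring
      _ ≤ c * (2:ℝ) ^ t * ((2:ℝ) ^ (-t) * (K + (t + s)) ^ 2) := by
          apply mul_le_mul_of_nonneg_left key
          exact mul_nonneg hcpos.le h2tp.le
      _ = ((2:ℝ) ^ t * (2:ℝ) ^ (-t)) * (c * (K + (t + s)) ^ 2) := by ring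
      _ = c * (K + (t + s)) ^ 2 := by rw [h2t]; ring
  · have hsa : a < s := by
      have := Real.logb_lt_logb one_lt_two hm49p hn1
      rwa [hsdef, haa] at this
    rcases le_or_gt (n:ℝ) (m ^ ((8:ℝ) / 9)) with hn2 | hn2
    · -- case B: n in piece 2
      have hs2a : s ≤ 2 * a := by
        have := Real.logb_le_logb_of_le one_lt_two hn0 hn2
        rwa [hsdef, hm89] at this
      rcases le_or_gt (α * n) (m ^ ((4:ℝ) / 9)) with hq | hq
      · -- B1 : αn in piece 1
        have hwa : t + s ≤ a := by
          have := Real.logb_le_logb_of_le one_lt_two hαn0 hq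
          rwa [hts, haa] at this
        rw [hf₂ n hn1 hn2, hf₁ (α * n) hαn0 hq, hlog1 _ hαn0, hlog2 n hn0, hts, haa, hsdef]
        have key := caseB K a (s - a) (t + s) (-t) hK3 (by linarith) hw0 hwa (by ring)
        calc α * (c ^ 2 * a ^ 2 * (K + s - a) ^ 2)
            = (2:ℝ) ^ t * c ^ 2 * (a ^ 2 * (K + (s - a)) ^ 2) := by rw [hαeq]; ring
          _ ≤ (2:ℝ) ^ t * c ^ 2 * (4 * K ^ 2 * (2:ℝ) ^ (-t) * (K + (t + s)) ^ 2) := by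
              apply mul_le_mul_of_nonneg_left key
              exact mul_nonneg h2tp.le (sq_nonneg c)
          _ = ((2:ℝ) ^ t * (2:ℝ) ^ (-t)) * (c * (4 * K ^ 2)) * (c * (K + (t + s)) ^ 2) := by
              ring
          _ = c * (K + (t + s)) ^ 2 := by rw [h2t, hc4]; ring
      · -- B2 : αn in piece 2
        have hαn2 : α * n ≤ m ^ ((8:ℝ) / 9) := le_trans hαnn hn2
        have hwa' : a < t + s := by
          have := Real.logb_lt_logb one_lt_two hm49p hq
          rwa [hts, haa] at this
        rw [hf₂ n hn1 hn2, hf₂ (α * n) hq hαn2, hlog2 n hn0, hlog2 _ hαn0, hts, haa, hsdef]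
        have key : (K + s - a) ^ 2 ≤ (2:ℝ) ^ (-t) * (K + (t + s) - a) ^ 2 :=
          expA' (K + (t + s) - a) (-t) _ (by linarith) (by linarith) (by ring)
        calc α * (c ^ 2 * a ^ 2 * (K + s - a) ^ 2)
            = c ^ 2 * a ^ 2 * (2:ℝ) ^ t * (K + s - a) ^ 2 := by rw [hαeq]; ring
          _ ≤ c ^ 2 * a ^ 2 * (2:ℝ) ^ t * ((2:ℝ) ^ (-t) * (K + (t + s) - a) ^ 2) := by
              apply mul_le_mul_of_nonneg_left key
              exact mul_nonneg (mul_nonneg (sq_nonneg c) (sq_nonneg a)) h2tp.le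
          _ = ((2:ℝ) ^ t * (2:ℝ) ^ (-t)) * (c ^ 2 * a ^ 2 * (K + (t + s) - a) ^ 2) := by ring
          _ = c ^ 2 * a ^ 2 * (K + (t + s) - a) ^ 2 := by rw [h2t]; ring
    · -- case C : n in piece 3
      have hs2a : 2 * a < s := by
        have := Real.logb_lt_logb one_lt_two hm89p hn2
        rwa [hsdef, hm89] at this
      rcases le_or_gt (α * n) (m ^ ((4:ℝ) / 9)) with hq | hq
      · -- C1 : αn in piece 1
        have hwa : t + s ≤ a := by
          have := Real.logb_le_logb_of_le one_lt_two hαn0 hq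
          rwa [hts, haa] at this
        rw [hf₃ n hn2 hnm, hf₁ (α * n) hαn0 hq, hlog1 _ hαn0, hlog3 n hn0, hts, haa, hsdef]
        have key := caseC K a (s - 2 * a) (t + s) (-t) hK3 (by linarith) hw0 hwa (by ring)
        calc α * (c ^ 3 * a ^ 4 * (K + s - 2 * a) ^ 2)
            = (2:ℝ) ^ t * c ^ 3 * (a ^ 4 * (K + (s - 2 * a)) ^ 2) := by rw [hαeq]; ring
          _ ≤ (2:ℝ) ^ t * c ^ 3 * (16 * K ^ 4 * (2:ℝ) ^ (-t) * (K + (t + s)) ^ 2) := by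
              apply mul_le_mul_of_nonneg_left key
              exact mul_nonneg h2tp.le (pow_nonneg hcpos.le 3)
          _ = ((2:ℝ) ^ t * (2:ℝ) ^ (-t)) * ((c * (4 * K ^ 2)) * (c * (4 * K ^ 2))) *
              (c * (K + (t + s)) ^ 2) := by ring
          _ = c * (K + (t + s)) ^ 2 := by rw [h2t, hc4]; ring
      · rcases le_or_gt (α * n) (m ^ ((8:ℝ) / 9)) with hq2 | hq2
        · -- C2 : αn in piece 2
          have hwa' : a < t + s := by
            have := Real.logb_lt_logb one_lt_two hm49p hq
            rwa [hts, haa] at this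
          have hw2a : t + s ≤ 2 * a := by
            have := Real.logb_le_logb_of_le one_lt_two hαn0 hq2
            rwa [hts, hm89] at this
          rw [hf₃ n hn2 hnm, hf₂ (α * n) hq hq2, hlog3 n hn0, hlog2 _ hαn0, hts, haa, hsdef]
          have key := caseB K a (s - 2 * a) (t + s - a) (-t) hK3 (by linarith)
            (by linarith) (by linarith) (by ring)
          calc α * (c ^ 3 * a ^ 4 * (K + s - 2 * a) ^ 2)
              = (2:ℝ) ^ t * c ^ 3 * a ^ 2 * (a ^ 2 * (K + (s - 2 * a)) ^ 2) := by
                rw [hαeq]; ring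
            _ ≤ (2:ℝ) ^ t * c ^ 3 * a ^ 2 *
                (4 * K ^ 2 * (2:ℝ) ^ (-t) * (K + (t + s - a)) ^ 2) := by
                apply mul_le_mul_of_nonneg_left key
                exact mul_nonneg (mul_nonneg h2tp.le (pow_nonneg hcpos.le 3)) (sq_nonneg a)
            _ = ((2:ℝ) ^ t * (2:ℝ) ^ (-t)) * (c * (4 * K ^ 2)) *
                (c ^ 2 * a ^ 2 * (K + (t + s) - a) ^ 2) := by ring
            _ = c ^ 2 * a ^ 2 * (K + (t + s) - a) ^ 2 := by rw [h2t, hc4]; ring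
        · -- C3 : αn in piece 3
          have hαn3 : α * n ≤ m := le_trans hαnn hnm
          have hw2a' : 2 * a < t + s := by
            have := Real.logb_lt_logb one_lt_two hm89p hq2
            rwa [hts, hm89] at this
          rw [hf₃ n hn2 hnm, hf₃ (α * n) hq2 hαn3, hlog3 n hn0, hlog3 _ hαn0, hts, haa, hsdef]
          have key : (K + s - 2 * a) ^ 2 ≤ (2:ℝ) ^ (-t) * (K + (t + s) - 2 * a) ^ 2 :=
            expA' (K + (t + s) - 2 * a) (-t) _ (by linarith) (by linarith) (by ring)
          calc α * (c ^ 3 * a ^ 4 * (K + s - 2 * a) ^ 2)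
              = c ^ 3 * a ^ 4 * (2:ℝ) ^ t * (K + s - 2 * a) ^ 2 := by rw [hαeq]; ring
            _ ≤ c ^ 3 * a ^ 4 * (2:ℝ) ^ t *
                ((2:ℝ) ^ (-t) * (K + (t + s) - 2 * a) ^ 2) := by
                apply mul_le_mul_of_nonneg_left key
                exact mul_nonneg (mul_nonneg (pow_nonneg hcpos.le 3)
                  (pow_nonneg ha0 4)) h2tp.le
            _ = ((2:ℝ) ^ t * (2:ℝ) ^ (-t)) *
                (c ^ 3 * a ^ 4 * (K + (t + s) - 2 * a) ^ 2) := by ring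
            _ = c ^ 3 * a ^ 4 * (K + (t + s) - 2 * a) ^ 2 := by rw [h2t]; ring
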